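/- Let ρ : ℝ → [0,1] be measurable with ∫_0^∞ ρ < ∞ and ∫_{−∞}^0 (1−ρ) < ∞ and ∫_0^∞ ρ = ∫_{−∞}^0 (1−ρ) (median at 0). Let G_t ρ(r) = ∫ G_t(r,r′) ρ(r′) dr′ with Gaussian kernel G_t(r,r′) = exp(−(r−r′)²/2t)/√(2πt). Then for every t > 0: (i) F(0; G_t ρ) = ∫_0^∞ G_t ρ(r) dr < ∞, (ii) F̂(0; G_t ρ) = ∫_{−∞}^0 (1 − G_t ρ(r)) dr < ∞, and (iii) F(0; G_t ρ) = F̂(0; G_t ρ), i.e. the median of G_t ρ remains at 0. -/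

import Mathlib

open MeasureTheory

/-- The Gaussian heat kernel `G_t(r,r') = exp(−(r−r')²/(2t))/√(2πt)`. -/
noncomputable def gaussK (t r r' : ℝ) : ℝ :=
  Real.exp (-(r - r') ^ 2 / (2 * t)) / Real.sqrt (2 * Real.pi * t)

/-- The heat semigroup applied to a density: `G_t ρ(r) = ∫ G_t(r,r') ρ(r') dr'`. -/
noncomputable def heatEvol (t : ℝ) (ρ : ℝ → ℝ) (r : ℝ) : ℝ :=
  ∫ r', gaussK t r r' * ρ r'

lemma gaussK_nonneg (t r r' : ℝ) : 0 ≤ gaussK t r r' :=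
  div_nonneg (Real.exp_pos _).le (Real.sqrt_nonneg _)

lemma gaussK_symm (t r r' : ℝ) : gaussK t r r' = gaussK t r' r := by
  unfold gaussK; ring_nf

lemma gaussK_neg (t r r' : ℝ) : gaussK t (-r) r' = gaussK t r (-r') := by
  unfold gaussK; ring_nf

lemma gaussK_eq (t r r' : ℝ) :
    gaussK t r r' = Real.exp (-(2 * t)⁻¹ * (r' - r) ^ 2) / Real.sqrt (2 * Real.pi * t) := by
  unfold gaussK
  congr 1
  rw [div_eq_mul_inv]
  ring_nf

lemma gaussK_integrable {t : ℝ} (ht : 0 < t) (r : ℝ) :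
    Integrable (fun r' => gaussK t r r') := by
  have hc : (0:ℝ) < (2 * t)⁻¹ := by positivity
  have h := ((integrable_exp_neg_mul_sq hc).comp_sub_right r).div_const
    (Real.sqrt (2 * Real.pi * t))
  exact h.congr (Filter.Eventually.of_forall fun r' => (gaussK_eq t r r').symm)

lemma gaussK_integral {t : ℝ} (ht : 0 < t) (r : ℝ) :
    ∫ r', gaussK t r r' = 1 := by
  have hc : (0:ℝ) < (2 * t)⁻¹ := by positivity
  have hs : (0:ℝ) < Real.sqrt (2 * Real.pi * t) :=
    Real.sqrt_pos.2 (by positivity)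
  simp_rw [gaussK_eq t r, div_eq_mul_inv]
  rw [integral_mul_const]
  have : (fun r' : ℝ => Real.exp (-(2 * t)⁻¹ * (r' - r) ^ 2))
      = fun r' => (fun x => Real.exp (-(2 * t)⁻¹ * x ^ 2)) (r' - r) := rfl
  rw [this, integral_sub_right_eq_self (fun x => Real.exp (-(2 * t)⁻¹ * x ^ 2)) r,
    integral_gaussian]
  have hπ : Real.pi / (2 * t)⁻¹ = 2 * Real.pi * t := by
    field_simp
  rw [hπ, mul_inv_cancel₀ hs.ne']

lemma gaussK_le {t : ℝ} (ht : 0 < t) (r r' : ℝ) :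
    gaussK t r r' ≤ (Real.sqrt (2 * Real.pi * t))⁻¹ := by
  unfold gaussK
  rw [div_eq_mul_inv]
  have h1 : Real.exp (-(r - r') ^ 2 / (2 * t)) ≤ 1 := by
    rw [Real.exp_le_one_iff, neg_div]
    exact neg_nonpos.2 (by positivity)
  exact mul_le_of_le_one_left (by positivity) h1

lemma gaussK_cont (t : ℝ) : Continuous (fun p : ℝ × ℝ => gaussK t p.1 p.2) := by
  unfold gaussK
  simp_rw [div_eq_mul_inv]
  fun_prop

/-- `phiK t r = ∫_{r' < 0} G_t(r,r')`. -/
noncomputable def phiK (t r : ℝ) : ℝ := ∫ r' in Set.Iio (0:ℝ), gaussK t r r'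

lemma phiK_meas (t : ℝ) : Measurable (phiK t) := by
  have h : ∀ r, phiK t r
      = ∫ r', ((Set.univ : Set ℝ) ×ˢ Set.Iio (0:ℝ)).indicator
          (fun p : ℝ × ℝ => gaussK t p.1 p.2) (r, r') := by
    intro r
    rw [phiK, ← integral_indicator measurableSet_Iio]
    congr 1
    funext r'
    by_cases hr' : r' ∈ Set.Iio (0:ℝ)
    · rw [Set.indicator_of_mem hr', Set.indicator_of_mem (Set.mem_prod.2 ⟨Set.mem_univ r, hr'⟩)]
    · rw [Set.indicator_of_notMem hr',
        Set.indicator_of_notMem (fun hm => hr' (Set.mem_prod.1 hm).2)]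
  rw [show phiK t = _ from funext h]
  exact (StronglyMeasurable.integral_prod_right'
    (((gaussK_cont t).stronglyMeasurable).indicator
      (MeasurableSet.univ.prod measurableSet_Iio))).measurable

lemma phiK_nonneg (t r : ℝ) : 0 ≤ phiK t r :=
  setIntegral_nonneg measurableSet_Iio fun r' _ => gaussK_nonneg t r r'

lemma phiK_le_one {t : ℝ} (ht : 0 < t) (r : ℝ) : phiK t r ≤ 1 := by
  rw [← gaussK_integral ht r]
  exact setIntegral_le_integral (gaussK_integrable ht r)
    (Filter.Eventually.of_forall fun r' => gaussK_nonneg t r r')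

lemma phiK_decay {t : ℝ} (ht : 0 < t) {r : ℝ} (hr : 0 ≤ r) :
    phiK t r ≤ Real.exp (-(2 * t)⁻¹ * r ^ 2) := by
  have hc : (0:ℝ) < (2 * t)⁻¹ := by positivity
  have key : ∀ r' ∈ Set.Iio (0:ℝ),
      gaussK t r r' ≤ Real.exp (-(2 * t)⁻¹ * r ^ 2) * gaussK t 0 r' := by
    intro r' hr'
    rw [gaussK_eq t r r', gaussK_eq t 0 r', ← mul_div_assoc, ← Real.exp_add]
    gcongr
    have h2 : r' < 0 := hr'
    nlinarith [mul_nonneg hr (neg_nonneg.2 h2.le), hc.le,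
        mul_nonneg (mul_nonneg hr (neg_nonneg.2 h2.le)) hc.le]
  calc phiK t r ≤ ∫ r' in Set.Iio (0:ℝ),
        Real.exp (-(2 * t)⁻¹ * r ^ 2) * gaussK t 0 r' := by
        apply setIntegral_mono_on
          ((gaussK_integrable ht r).integrableOn)
          (((gaussK_integrable ht 0).const_mul _).integrableOn)
          measurableSet_Iio key
    _ = Real.exp (-(2 * t)⁻¹ * r ^ 2) * phiK t 0 := by
        rw [integral_const_mul]; rfl
    _ ≤ Real.exp (-(2 * t)⁻¹ * r ^ 2) * 1 := by
        exact mul_le_mul_of_nonneg_left (phiK_le_one ht 0) (Real.exp_pos _).le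
    _ = Real.exp (-(2 * t)⁻¹ * r ^ 2) := mul_one _

lemma phiK_integrableOn {t : ℝ} (ht : 0 < t) :
    IntegrableOn (phiK t) (Set.Ioi (0:ℝ)) := by
  have hc : (0:ℝ) < (2 * t)⁻¹ := by positivity
  apply Integrable.mono' ((integrable_exp_neg_mul_sq hc).integrableOn)
    ((phiK_meas t).aestronglyMeasurable.restrict)
  filter_upwards [ae_restrict_mem measurableSet_Ioi] with r hr
  rw [Real.norm_eq_abs, abs_of_nonneg (phiK_nonneg t r)]
  exact phiK_decay ht (le_of_lt hr)

lemma phiK_reflect {t : ℝ} (ht : 0 < t) (r : ℝ) :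
    phiK t (-r) = 1 - phiK t r := by
  have h1 : phiK t (-r) = ∫ r' in Set.Ioi (0:ℝ), gaussK t r r' := by
    rw [phiK]
    have : ∀ r', gaussK t (-r) r' = (fun x => gaussK t r x) (-r') :=
      fun r' => gaussK_neg t r r'
    simp_rw [this]
    rw [setIntegral_congr_set Iio_ae_eq_Iic,
      integral_comp_neg_Iic 0 (fun x => gaussK t r x), neg_zero,
      ← integral_Ici_eq_integral_Ioi]
  have h2 : phiK t r + ∫ r' in Set.Ioi (0:ℝ), gaussK t r r' = 1 := by
    rw [phiK, setIntegral_congr_set Iio_ae_eq_Iic,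
      intervalIntegral.integral_Iic_add_Ioi ((gaussK_integrable ht r).integrableOn)
        ((gaussK_integrable ht r).integrableOn),
      gaussK_integral ht r]
  rw [h1]; linarith

theorem heat_preserves_median (ρ : ℝ → ℝ) (hmeas : Measurable ρ)
    (hmem : ∀ r : ℝ, ρ r ∈ Set.Icc (0 : ℝ) 1)
    (hF : IntegrableOn ρ (Set.Ioi (0 : ℝ)))
    (hFhat : IntegrableOn (fun r => 1 - ρ r) (Set.Iio (0 : ℝ)))
    (hmedian : ∫ r in Set.Ioi (0 : ℝ), ρ r = ∫ r in Set.Iio (0 : ℝ), (1 - ρ r)) :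
    ∀ t : ℝ, 0 < t →
      IntegrableOn (heatEvol t ρ) (Set.Ioi (0 : ℝ)) ∧
      IntegrableOn (fun r => 1 - heatEvol t ρ r) (Set.Iio (0 : ℝ)) ∧
      (∫ r in Set.Ioi (0 : ℝ), heatEvol t ρ r
        = ∫ r in Set.Iio (0 : ℝ), (1 - heatEvol t ρ r)) := by
  intro t ht
  -- the recentred density
  set f : ℝ → ℝ := fun r => ρ r - (Set.Iio (0:ℝ)).indicator 1 r with hf_def
  have hf_eq : f = fun r => (Set.Ici (0:ℝ)).indicator ρ r
      - (Set.Iio (0:ℝ)).indicator (fun r => 1 - ρ r) r := by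
    funext r
    by_cases h : r < 0
    · simp [hf_def, Set.indicator_apply, h, not_le.2 h]
    · simp [hf_def, Set.indicator_apply, h, not_lt.1 h]
  have hf_meas : Measurable f :=
    hmeas.sub (measurable_one.indicator measurableSet_Iio)
  have hFI : IntegrableOn ρ (Set.Ici (0:ℝ)) :=
    (integrableOn_Ici_iff_integrableOn_Ioi).2 hF
  have hf_int : Integrable f := by
    rw [hf_eq]
    exact ((integrable_indicator_iff measurableSet_Ici).2 hFI).sub
      ((integrable_indicator_iff measurableSet_Iio).2 hFhat)
  have hf_zero : ∫ r, f r = 0 := by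
    rw [hf_eq, integral_sub
      ((integrable_indicator_iff measurableSet_Ici).2 hFI)
      ((integrable_indicator_iff measurableSet_Iio).2 hFhat),
      integral_indicator measurableSet_Ici,
      integral_indicator measurableSet_Iio,
      integral_Ici_eq_integral_Ioi, hmedian, sub_self]
  -- pointwise integrability of kernel × f
  have hker : ∀ r, Integrable (fun r' => gaussK t r r' * f r') := by
    intro r
    apply hf_int.bdd_mul (c := (Real.sqrt (2 * Real.pi * t))⁻¹)
    · exact (((gaussK_cont t).comp (Continuous.prodMk_right r)).aestronglyMeasurable)
    · exact Filter.Eventually.of_forall fun r' => by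
        rw [Real.norm_eq_abs, abs_of_nonneg (gaussK_nonneg t r r')]
        exact gaussK_le ht r r'
  have hker1 : ∀ r', Integrable (fun r => gaussK t r r') := by
    intro r'
    exact (gaussK_integrable ht r').congr
      (Filter.Eventually.of_forall fun r => gaussK_symm t r' r)
  have hint1 : ∀ r', ∫ r, gaussK t r r' = 1 := by
    intro r'
    rw [show (fun r => gaussK t r r') = fun r => gaussK t r' r from
      funext fun r => gaussK_symm t r r']
    exact gaussK_integral ht r'
  -- integrability on the product
  have hF2meas : AEStronglyMeasurable (fun p : ℝ × ℝ => gaussK t p.1 p.2 * f p.2)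
      ((volume : Measure ℝ).prod volume) :=
    ((gaussK_cont t).measurable.mul (hf_meas.comp measurable_snd)).aestronglyMeasurable
  have hF2 : Integrable (fun p : ℝ × ℝ => gaussK t p.1 p.2 * f p.2)
      ((volume : Measure ℝ).prod volume) := by
    rw [integrable_prod_iff' hF2meas]
    constructor
    · refine Filter.Eventually.of_forall fun r' => ?_
      exact (hker1 r').mul_const (f r')
    · apply hf_int.norm.congr
      refine Filter.Eventually.of_forall fun r' => ?_
      have : ∀ r, ‖gaussK t r r' * f r'‖ = gaussK t r r' * ‖f r'‖ := by
        intro r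
        rw [norm_mul, Real.norm_eq_abs (gaussK t r r'),
          abs_of_nonneg (gaussK_nonneg t r r')]
      simp_rw [this]
      rw [integral_mul_const, hint1 r', one_mul]
  -- the convolution term
  set conv : ℝ → ℝ := fun r => ∫ r', gaussK t r r' * f r' with hconv_def
  have hconv_int : Integrable conv := hF2.integral_prod_left
  have hconv_zero : ∫ r, conv r = 0 := by
    rw [hconv_def]
    rw [integral_integral_swap hF2]
    have : ∀ r', ∫ r, gaussK t r r' * f r' = f r' := by
      intro r'
      rw [integral_mul_const, hint1 r', one_mul]
    simp_rw [this]
    exact hf_zero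
  -- decomposition of heatEvol
  have hdecomp : ∀ r, heatEvol t ρ r = phiK t r + conv r := by
    intro r
    have hρ : ∀ r', ρ r' = (Set.Iio (0:ℝ)).indicator 1 r' + f r' := by
      intro r'; simp [hf_def]
    have hindeq : (fun r' => gaussK t r r' * (Set.Iio (0:ℝ)).indicator 1 r')
        = (Set.Iio (0:ℝ)).indicator (fun r' => gaussK t r r') := by
      funext r'
      by_cases h : r' ∈ Set.Iio (0:ℝ)
      · simp [Set.indicator_of_mem h]
      · simp [Set.indicator_of_notMem h]
    have hind_int : Integrable
        (fun r' => gaussK t r r' * (Set.Iio (0:ℝ)).indicator 1 r') := by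
      rw [hindeq]
      exact (integrable_indicator_iff measurableSet_Iio).2
        ((gaussK_integrable ht r).integrableOn)
    rw [heatEvol]
    have : (fun r' => gaussK t r r' * ρ r')
        = fun r' => gaussK t r r' * (Set.Iio (0:ℝ)).indicator 1 r'
            + gaussK t r r' * f r' := by
      funext r'; rw [hρ r']; ring
    rw [this, integral_add hind_int (hker r), hindeq,
      integral_indicator measurableSet_Iio]
    rfl
  have hheat_eq : heatEvol t ρ = fun r => phiK t r + conv r := funext hdecomp
  -- (i)
  have h_i : IntegrableOn (heatEvol t ρ) (Set.Ioi (0:ℝ)) := by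
    rw [hheat_eq]
    exact (phiK_integrableOn ht).add hconv_int.integrableOn
  -- reflected phiK integrable on Iio 0
  have hrefl_int : IntegrableOn (fun r => phiK t (-r)) (Set.Iio (0:ℝ)) := by
    have h1 : Integrable ((Set.Ioi (0:ℝ)).indicator (phiK t)) :=
      (integrable_indicator_iff measurableSet_Ioi).2 (phiK_integrableOn ht)
    have h2 := h1.comp_neg
    have h3 : (fun x => ((Set.Ioi (0:ℝ)).indicator (phiK t)) (-x))
        = (Set.Iio (0:ℝ)).indicator (fun r => phiK t (-r)) := by
      funext x
      by_cases h : x < 0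
      · rw [Set.indicator_of_mem (by simpa using h : -x ∈ Set.Ioi (0:ℝ)),
          Set.indicator_of_mem (by simpa using h : x ∈ Set.Iio (0:ℝ))]
      · rw [Set.indicator_of_notMem (by simpa using h),
          Set.indicator_of_notMem (by simpa using h)]
    rw [h3] at h2
    exact (integrable_indicator_iff measurableSet_Iio).1 h2
  -- (ii)
  have hcompl_eq : (fun r => 1 - heatEvol t ρ r)
      = fun r => phiK t (-r) - conv r := by
    funext r
    rw [hdecomp r, phiK_reflect ht r]; ring
  have h_ii : IntegrableOn (fun r => 1 - heatEvol t ρ r) (Set.Iio (0:ℝ)) := by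
    rw [hcompl_eq]
    exact hrefl_int.sub hconv_int.integrableOn
  refine ⟨h_i, h_ii, ?_⟩
  -- (iii)
  have hsplit : (∫ r in Set.Iio (0:ℝ), conv r) + ∫ r in Set.Ioi (0:ℝ), conv r = 0 := by
    rw [setIntegral_congr_set Iio_ae_eq_Iic,
      intervalIntegral.integral_Iic_add_Ioi hconv_int.integrableOn hconv_int.integrableOn]
    exact hconv_zero
  have hreflint : ∫ r in Set.Iio (0:ℝ), phiK t (-r) = ∫ r in Set.Ioi (0:ℝ), phiK t r := by
    rw [setIntegral_congr_set Iio_ae_eq_Iic,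
      integral_comp_neg_Iic 0 (phiK t), neg_zero, ← integral_Ici_eq_integral_Ioi]
  calc ∫ r in Set.Ioi (0:ℝ), heatEvol t ρ r
      = (∫ r in Set.Ioi (0:ℝ), phiK t r) + ∫ r in Set.Ioi (0:ℝ), conv r := by
        rw [hheat_eq]
        exact integral_add (phiK_integrableOn ht) hconv_int.integrableOn
    _ = (∫ r in Set.Iio (0:ℝ), phiK t (-r)) - ∫ r in Set.Iio (0:ℝ), conv r := by
        rw [hreflint]; linarith
    _ = ∫ r in Set.Iio (0:ℝ), (1 - heatEvol t ρ r) := by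
        rw [hcompl_eq]
        exact (integral_sub hrefl_int hconv_int.integrableOn).symm
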